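/- If discrete random variables Z1, ..., ZK are mutually conditionally independent given (Y, S), then the redundant local information R := (sum over i of I(Y; Zi | S)) − I(Y; Z_{1:K} | S) equals the conditional total correlation TC(Z_{1:K} | S), and in particular R ≥ 0. -/

import Mathlib

open BigOperators

namespace CPT

variable {Ω : Type*} [Fintype Ω]

/-- Probability that the discrete random variable `X` takes value `a`, under pmf `p`. -/
noncomputable def prob {α : Type*} [DecidableEq α] (p : Ω → ℝ) (X : Ω → α) (a : α) : ℝ :=
  ∑ ω : Ω, if X ω = a then p ω else 0

/-- Shannon entropy of a discrete random variable `X` under pmf `p`. -/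
noncomputable def ent {α : Type*} [Fintype α] [DecidableEq α] (p : Ω → ℝ) (X : Ω → α) : ℝ :=
  ∑ a : α, Real.negMulLog (prob p X a)

/-- Conditional entropy `H(X | Y) = H(X, Y) - H(Y)`. -/
noncomputable def condEnt {α β : Type*} [Fintype α] [DecidableEq α] [Fintype β] [DecidableEq β]
    (p : Ω → ℝ) (X : Ω → α) (Y : Ω → β) : ℝ :=
  ent p (fun ω => (X ω, Y ω)) - ent p Y

/-- Conditional mutual information `I(X; Y | Z) = H(X|Z) + H(Y|Z) - H(X,Y|Z)`. -/
noncomputable def condMI {α β γ : Type*} [Fintype α] [DecidableEq α] [Fintype β] [DecidableEq β]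
    [Fintype γ] [DecidableEq γ] (p : Ω → ℝ) (X : Ω → α) (Y : Ω → β) (Z : Ω → γ) : ℝ :=
  condEnt p X Z + condEnt p Y Z - condEnt p (fun ω => (X ω, Y ω)) Z

/-- Conditional total correlation `TC(Z_{1:K} | A) = ∑ᵢ H(Zᵢ|A) - H(Z_{1:K}|A)`. -/
noncomputable def TC {K : ℕ} {α β : Type*} [Fintype α] [DecidableEq α] [Fintype β] [DecidableEq β]
    (p : Ω → ℝ) (Z : Fin K → Ω → α) (A : Ω → β) : ℝ :=
  (∑ i, condEnt p (Z i) A) - condEnt p (fun ω => fun i => Z i ω) A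

/-- `Z₁, …, Z_K` are mutually conditionally independent given `W`. -/
def CondIndepGiven {K : ℕ} {α β : Type*} [DecidableEq α] [DecidableEq β]
    (p : Ω → ℝ) (Z : Fin K → Ω → α) (W : Ω → β) : Prop :=
  ∀ (z : Fin K → α) (w : β),
    prob p (fun ω => ((fun i => Z i ω), W ω)) (z, w) * (prob p W w) ^ (K - 1) =
      ∏ i, prob p (fun ω => (Z i ω, W ω)) (z i, w)

/-! ### Auxiliary lemmas -/

section basics
variable {α α' : Type*} [DecidableEq α] (p : Ω → ℝ)

lemma prob_nonneg (hp : ∀ ω, 0 ≤ p ω) (X : Ω → α) (a : α) : 0 ≤ prob p X a :=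
  Finset.sum_nonneg fun ω _ => by by_cases h : X ω = a <;> simp [prob, h, hp ω]

lemma sum_prob [Fintype α] (X : Ω → α) : ∑ a, prob p X a = ∑ ω, p ω := by
  unfold prob
  rw [Finset.sum_comm]
  simp

lemma prob_comp [Fintype α] [DecidableEq α'] (f : α → α') (X : Ω → α) (b : α') :
    prob p (fun ω => f (X ω)) b = ∑ a, if f a = b then prob p X a else 0 := by
  unfold prob
  symm
  calc (∑ a, if f a = b then ∑ ω, if X ω = a then p ω else 0 else 0)
      = ∑ a, ∑ ω, (if f a = b then (if X ω = a then p ω else 0) else 0) := by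
        refine Finset.sum_congr rfl fun a _ => ?_; split <;> simp
    _ = ∑ ω, ∑ a, (if f a = b then (if X ω = a then p ω else 0) else 0) := Finset.sum_comm
    _ = ∑ ω : Ω, if f (X ω) = b then p ω else 0 := by
        refine Finset.sum_congr rfl fun ω _ => ?_
        rw [Finset.sum_eq_single (X ω)]
        · simp
        · intro a _ ha; split <;> simp [Ne.symm ha]
        · simp

lemma le_prob_comp [Fintype α] [DecidableEq α'] (hp : ∀ ω, 0 ≤ p ω)
    (f : α → α') (X : Ω → α) (a : α) :
    prob p X a ≤ prob p (fun ω => f (X ω)) (f a) := by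
  rw [prob_comp p f X (f a)]
  have := Finset.single_le_sum (f := fun a' => if f a' = f a then prob p X a' else 0)
    (fun a' _ => by by_cases h : f a' = f a <;> simp [h, prob_nonneg p hp])
    (Finset.mem_univ a)
  simpa using this

lemma prob_le_one (hp : ∀ ω, 0 ≤ p ω) (hp1 : ∑ ω, p ω = 1) [Fintype α] (X : Ω → α) (a : α) :
    prob p X a ≤ 1 := by
  rw [← hp1, ← sum_prob p X]
  exact Finset.single_le_sum (fun a' _ => prob_nonneg p hp X a') (Finset.mem_univ a)

lemma ent_comp [Fintype α] [Fintype α'] [DecidableEq α'] (e : α ≃ α') (X : Ω → α) :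
    ent p (fun ω => e (X ω)) = ent p X := by
  unfold ent
  rw [← Equiv.sum_comp e (fun a' => Real.negMulLog (prob p (fun ω => e (X ω)) a'))]
  refine Finset.sum_congr rfl fun a _ => ?_
  congr 1
  unfold prob
  exact Finset.sum_congr rfl fun ω _ => by simp

lemma ent_comp_eq_sum [Fintype α] [Fintype α'] [DecidableEq α'] (f : α → α') (X : Ω → α) :
    ent p (fun ω => f (X ω)) =
      -∑ a, prob p X a * Real.log (prob p (fun ω => f (X ω)) (f a)) := by
  unfold ent
  calc (∑ b, Real.negMulLog (prob p (fun ω => f (X ω)) b))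
      = ∑ b, ∑ a, (if f a = b then
          -(prob p X a * Real.log (prob p (fun ω => f (X ω)) b)) else 0) := by
        refine Finset.sum_congr rfl fun b _ => ?_
        rw [Real.negMulLog, prob_comp, neg_mul, Finset.sum_mul, ← Finset.sum_neg_distrib]
        refine Finset.sum_congr rfl fun a _ => ?_
        split <;> simp
    _ = ∑ a, ∑ b, (if f a = b then
          -(prob p X a * Real.log (prob p (fun ω => f (X ω)) b)) else 0) := Finset.sum_comm
    _ = ∑ a, -(prob p X a * Real.log (prob p (fun ω => f (X ω)) (f a))) := by
        refine Finset.sum_congr rfl fun a _ => ?_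
        rw [Finset.sum_ite_eq]
        simp
    _ = -∑ a, prob p X a * Real.log (prob p (fun ω => f (X ω)) (f a)) := by
        rw [Finset.sum_neg_distrib]

lemma ent_eq_sum [Fintype α] (X : Ω → α) :
    ent p X = -∑ a, prob p X a * Real.log (prob p X a) := by
  simp [ent, Real.negMulLog, neg_mul, ← Finset.sum_neg_distrib]

lemma sum_prob_fst {β : Type*} [Fintype α] [Fintype β] [DecidableEq β]
    (X : Ω → α) (S : Ω → β) (s : β) :
    ∑ a, prob p (fun ω => (X ω, S ω)) (a, s) = prob p S s := by
  unfold prob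
  rw [Finset.sum_comm]
  refine Finset.sum_congr rfl fun ω _ => ?_
  by_cases h : S ω = s <;> simp [Prod.ext_iff, h]

end basics

/-- Key identity: under mutual conditional independence given `W`, the pairwise joint
entropies with `W` sum to `(K - 1) H(W) + H(Z_{1:K}, W)`. -/
lemma sum_ent_pair_of_condIndep {K : ℕ} {α γ' : Type*}
    [Fintype α] [DecidableEq α] [Fintype γ'] [DecidableEq γ']
    (p : Ω → ℝ) (hp : ∀ ω, 0 ≤ p ω) (hp1 : ∑ ω, p ω = 1)
    (Z : Fin K → Ω → α) (W : Ω → γ')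
    (h : CondIndepGiven p Z W) :
    ∑ i, ent p (fun ω => (Z i ω, W ω)) =
      ((K : ℝ) - 1) * ent p W + ent p (fun ω => ((fun i => Z i ω), W ω)) := by
  set T : Ω → (Fin K → α) × γ' := fun ω => ((fun i => Z i ω), W ω) with hT
  set q : (Fin K → α) × γ' → ℝ := prob p T with hq
  set fW : (Fin K → α) × γ' → γ' := Prod.snd with hfW
  set fi : Fin K → ((Fin K → α) × γ') → α × γ' := fun i t => (t.1 i, t.2) with hfi
  have hWrw : ent p W = -∑ t, q t * Real.log (prob p (fun ω => fW (T ω)) (fW t)) :=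
    ent_comp_eq_sum p fW T
  have hirw : ∀ i, ent p (fun ω => (Z i ω, W ω)) =
      -∑ t, q t * Real.log (prob p (fun ω => fi i (T ω)) (fi i t)) :=
    fun i => ent_comp_eq_sum p (fi i) T
  have hTrw : ent p T = -∑ t, q t * Real.log (q t) := ent_eq_sum p T
  have key : ∀ t : (Fin K → α) × γ',
      q t * (Real.log (q t) + ((K : ℝ) - 1) * Real.log (prob p (fun ω => fW (T ω)) (fW t))
        - ∑ i, Real.log (prob p (fun ω => fi i (T ω)) (fi i t))) = 0 := by
    intro t
    rcases eq_or_lt_of_le (prob_nonneg p hp T t) with hq0 | hq0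
    · rw [← hq] at hq0
      rw [← hq0, zero_mul]
    have hind : q t * (prob p (fun ω => fW (T ω)) (fW t)) ^ (K - 1)
        = ∏ i, prob p (fun ω => fi i (T ω)) (fi i t) := h t.1 t.2
    have hle_r : q t ≤ prob p (fun ω => fW (T ω)) (fW t) := le_prob_comp p hp fW T t
    have hle_i : ∀ i, q t ≤ prob p (fun ω => fi i (T ω)) (fi i t) :=
      fun i => le_prob_comp p hp (fi i) T t
    have hrpos : 0 < prob p (fun ω => fW (T ω)) (fW t) := lt_of_lt_of_le hq0 hle_r
    have hipos : ∀ i, 0 < prob p (fun ω => fi i (T ω)) (fi i t) :=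
      fun i => lt_of_lt_of_le hq0 (hle_i i)
    have hlogs : Real.log (q t) + ((K : ℝ) - 1) *
        Real.log (prob p (fun ω => fW (T ω)) (fW t))
        = ∑ i, Real.log (prob p (fun ω => fi i (T ω)) (fi i t)) := by
      rcases Nat.eq_zero_or_pos K with hK | hK
      · subst hK
        have h1 : q t = 1 := by simpa using hind
        have hr1 : prob p (fun ω => fW (T ω)) (fW t) = 1 :=
          le_antisymm (prob_le_one p hp hp1 _ _) (h1 ▸ hle_r)
        simp [h1, hr1]
      · have := congrArg Real.log hind
        rw [Real.log_mul (ne_of_gt hq0) (by positivity), Real.log_pow,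
          Real.log_prod (fun i _ => ne_of_gt (hipos i))] at this
        rw [← this]
        congr 1
        congr 1
        rw [Nat.cast_sub hK, Nat.cast_one]
    rw [hlogs]
    simp
  have hsum : ∑ t, (q t * Real.log (q t)
      + ((K : ℝ) - 1) * (q t * Real.log (prob p (fun ω => fW (T ω)) (fW t)))
      - ∑ i, q t * Real.log (prob p (fun ω => fi i (T ω)) (fi i t))) = 0 := by
    refine Finset.sum_eq_zero fun t _ => ?_
    have hk := key t
    rw [mul_sub, mul_add, Finset.mul_sum, mul_left_comm] at hk
    linarith
  rw [Finset.sum_sub_distrib, Finset.sum_add_distrib, ← Finset.mul_sum, Finset.sum_comm] at hsum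
  have hrw2 : ∀ i, ∑ t, q t * Real.log (prob p (fun ω => fi i (T ω)) (fi i t))
      = -ent p (fun ω => (Z i ω, W ω)) := fun i => by rw [hirw i]; ring
  calc (∑ i, ent p (fun ω => (Z i ω, W ω)))
      = -∑ i, ∑ t, q t * Real.log (prob p (fun ω => fi i (T ω)) (fi i t)) := by
        rw [← Finset.sum_neg_distrib]
        exact Finset.sum_congr rfl fun i _ => by rw [hrw2 i]; ring
    _ = ((K : ℝ) - 1) * ent p W + ent p T := by
        rw [hWrw, hTrw]
        linarith

/-- Nonnegativity of conditional mutual information. -/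
lemma condMI_nonneg {α β γ : Type*}
    [Fintype α] [DecidableEq α] [Fintype β] [DecidableEq β] [Fintype γ] [DecidableEq γ]
    (p : Ω → ℝ) (hp : ∀ ω, 0 ≤ p ω) (hp1 : ∑ ω, p ω = 1)
    (X : Ω → α) (Y : Ω → β) (S : Ω → γ) :
    0 ≤ condMI p X Y S := by
  set T : Ω → (α × β) × γ := fun ω => ((X ω, Y ω), S ω) with hT
  set q : (α × β) × γ → ℝ := prob p T with hq
  set fA : (α × β) × γ → α × γ := fun t => (t.1.1, t.2) with hfA
  set fB : (α × β) × γ → β × γ := fun t => (t.1.2, t.2) with hfB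
  set fC : (α × β) × γ → γ := fun t => t.2 with hfC
  set A : α × γ → ℝ := prob p (fun ω => fA (T ω)) with hA
  set B : β × γ → ℝ := prob p (fun ω => fB (T ω)) with hB
  set C : γ → ℝ := prob p (fun ω => fC (T ω)) with hC
  have hArw : ent p (fun ω => (X ω, S ω)) = -∑ t, q t * Real.log (A (fA t)) :=
    ent_comp_eq_sum p fA T
  have hBrw : ent p (fun ω => (Y ω, S ω)) = -∑ t, q t * Real.log (B (fB t)) :=
    ent_comp_eq_sum p fB T
  have hCrw : ent p S = -∑ t, q t * Real.log (C (fC t)) := ent_comp_eq_sum p fC T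
  have hTrw : ent p T = -∑ t, q t * Real.log (q t) := ent_eq_sum p T
  have hMI : condMI p X Y S = ∑ t, q t *
      (Real.log (q t) + Real.log (C (fC t)) - Real.log (A (fA t)) - Real.log (B (fB t))) := by
    have : condMI p X Y S = ent p (fun ω => (X ω, S ω)) + ent p (fun ω => (Y ω, S ω))
        - ent p T - ent p S := by
      unfold condMI condEnt; ring
    rw [this, hArw, hBrw, hCrw, hTrw]
    simp only [mul_add, mul_sub]
    rw [Finset.sum_sub_distrib, Finset.sum_sub_distrib, Finset.sum_add_distrib]
    ring
  have hpoint : ∀ t, q t - A (fA t) * B (fB t) / C (fC t) ≤ q t *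
      (Real.log (q t) + Real.log (C (fC t)) - Real.log (A (fA t)) - Real.log (B (fB t))) := by
    intro t
    have ha0 : 0 ≤ A (fA t) := prob_nonneg p hp _ _
    have hb0 : 0 ≤ B (fB t) := prob_nonneg p hp _ _
    have hc0 : 0 ≤ C (fC t) := prob_nonneg p hp _ _
    rcases eq_or_lt_of_le (prob_nonneg p hp T t) with hq0 | hq0
    · rw [← hq] at hq0
      rw [← hq0, zero_mul, zero_sub, neg_nonpos]
      positivity
    have hqa : q t ≤ A (fA t) := le_prob_comp p hp fA T t
    have hqb : q t ≤ B (fB t) := le_prob_comp p hp fB T t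
    have hqc : q t ≤ C (fC t) := le_prob_comp p hp fC T t
    have hapos : 0 < A (fA t) := lt_of_lt_of_le hq0 hqa
    have hbpos : 0 < B (fB t) := lt_of_lt_of_le hq0 hqb
    have hcpos : 0 < C (fC t) := lt_of_lt_of_le hq0 hqc
    have hlog : Real.log (A (fA t) * B (fB t) / (q t * C (fC t)))
        ≤ A (fA t) * B (fB t) / (q t * C (fC t)) - 1 :=
      Real.log_le_sub_one_of_pos (by positivity)
    rw [Real.log_div (by positivity) (by positivity),
      Real.log_mul (ne_of_gt hapos) (ne_of_gt hbpos),
      Real.log_mul (ne_of_gt hq0) (ne_of_gt hcpos)] at hlog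
    have h2 : q t * (1 - A (fA t) * B (fB t) / (q t * C (fC t)))
        ≤ q t * (Real.log (q t) + Real.log (C (fC t)) - Real.log (A (fA t))
          - Real.log (B (fB t))) :=
      mul_le_mul_of_nonneg_left (by linarith) (le_of_lt hq0)
    have h3 : q t * (1 - A (fA t) * B (fB t) / (q t * C (fC t)))
        = q t - A (fA t) * B (fB t) / C (fC t) := by
      rw [mul_sub, mul_one, mul_div_assoc', mul_div_mul_left _ _ (c := q t) (ne_of_gt hq0)]
    linarith
  have hsumq : ∑ t, q t = 1 := by rw [hq, sum_prob, hp1]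
  have hAB : ∑ t : (α × β) × γ, A (fA t) * B (fB t) / C (fC t) ≤ 1 := by
    have hmargA : ∀ s, ∑ x, A (x, s) = C s := fun s => sum_prob_fst p X S s
    have hmargB : ∀ s, ∑ y, B (y, s) = C s := fun s => sum_prob_fst p Y S s
    have step1 : ∑ t : (α × β) × γ, A (fA t) * B (fB t) / C (fC t)
        = ∑ s, ∑ x, ∑ y, A (x, s) * B (y, s) / C s := by
      rw [Fintype.sum_prod_type, Finset.sum_comm]
      exact Finset.sum_congr rfl fun s _ =>
        Fintype.sum_prod_type (f := fun xy => A (fA (xy, s)) * B (fB (xy, s)) / C (fC (xy, s)))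
    have step2 : ∀ s, ∑ x, ∑ y, A (x, s) * B (y, s) / C s = C s * C s / C s := by
      intro s
      calc ∑ x, ∑ y, A (x, s) * B (y, s) / C s
          = (∑ x, A (x, s)) * (∑ y, B (y, s)) / C s := by
            rw [Finset.sum_mul_sum, Finset.sum_div]
            exact Finset.sum_congr rfl fun x _ => (Finset.sum_div _ _ _).symm
        _ = C s * C s / C s := by rw [hmargA s, hmargB s]
    rw [step1]
    calc ∑ s, ∑ x, ∑ y, A (x, s) * B (y, s) / C s = ∑ s, C s * C s / C s :=
          Finset.sum_congr rfl fun s _ => step2 s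
      _ ≤ ∑ s, C s := by
          refine Finset.sum_le_sum fun s _ => ?_
          rcases eq_or_ne (C s) 0 with h | h
          · simp [h]
          · rw [mul_div_assoc, div_self h, mul_one]
      _ = 1 := by rw [hC, sum_prob, hp1]
  calc (0:ℝ) = 1 - 1 := by norm_num
    _ ≤ ∑ t, q t - ∑ t, A (fA t) * B (fB t) / C (fC t) := by rw [hsumq]; linarith
    _ = ∑ t, (q t - A (fA t) * B (fB t) / C (fC t)) := (Finset.sum_sub_distrib _ _).symm
    _ ≤ ∑ t, q t * (Real.log (q t) + Real.log (C (fC t)) - Real.log (A (fA t))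
          - Real.log (B (fB t))) := Finset.sum_le_sum fun t _ => hpoint t
    _ = condMI p X Y S := hMI.symm

/-- Decomposition of `Fin (K+1) → α` as head and tail, with good definitional behaviour. -/
def consEquiv (K : ℕ) (α : Type*) : (Fin (K + 1) → α) ≃ α × (Fin K → α) where
  toFun f := (f 0, fun i => f i.succ)
  invFun x := Fin.cons x.1 x.2
  left_inv f := Fin.cons_self_tail f
  right_inv x := by simp

/-- Rotation equivalence used to shuffle joint variables. -/
def rotEquiv (σ β γ : Type*) : (β × σ) × γ ≃ σ × (β × γ) where
  toFun x := (x.1.2, (x.1.1, x.2))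
  invFun x := ((x.2.1, x.1), x.2.2)
  left_inv _ := rfl
  right_inv _ := rfl

lemma condEnt_pair_le {α β γ : Type*}
    [Fintype α] [DecidableEq α] [Fintype β] [DecidableEq β] [Fintype γ] [DecidableEq γ]
    (p : Ω → ℝ) (hp : ∀ ω, 0 ≤ p ω) (hp1 : ∑ ω, p ω = 1)
    (X : Ω → α) (Y : Ω → β) (S : Ω → γ) :
    condEnt p (fun ω => (X ω, Y ω)) S ≤ condEnt p X S + condEnt p Y S := by
  have h := condMI_nonneg p hp hp1 X Y S
  unfold condMI at h
  linarith

/-- Subadditivity of conditional entropy. -/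
lemma condEnt_subadd {K : ℕ} {α γ : Type*}
    [Fintype α] [DecidableEq α] [Fintype γ] [DecidableEq γ]
    (p : Ω → ℝ) (hp : ∀ ω, 0 ≤ p ω) (hp1 : ∑ ω, p ω = 1)
    (Z : Fin K → Ω → α) (S : Ω → γ) :
    condEnt p (fun ω => fun i => Z i ω) S ≤ ∑ i, condEnt p (Z i) S := by
  induction K with
  | zero =>
    have h0 : ent p (fun ω => ((fun i : Fin 0 => Z i ω), S ω)) = ent p S := by
      have h := ent_comp p (Equiv.uniqueProd γ (Fin 0 → α)).symm S
      rw [← h]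
      congr 1
      funext ω
      apply Prod.ext
      · funext i; exact i.elim0
      · rfl
    simp [condEnt, h0]
  | succ K ih =>
    have hent : ent p (fun ω => ((Z 0 ω, fun i : Fin K => Z i.succ ω), S ω))
        = ent p (fun ω => ((fun i : Fin (K + 1) => Z i ω), S ω)) :=
      ent_comp p ((consEquiv K α).prodCongr (Equiv.refl γ))
        (fun ω => ((fun i : Fin (K + 1) => Z i ω), S ω))
    calc condEnt p (fun ω => fun i : Fin (K + 1) => Z i ω) S
        = condEnt p (fun ω => (Z 0 ω, fun i : Fin K => Z i.succ ω)) S := by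
          unfold condEnt; rw [hent]
      _ ≤ condEnt p (Z 0) S + condEnt p (fun ω => fun i : Fin K => Z i.succ ω) S :=
          condEnt_pair_le p hp hp1 _ _ _
      _ ≤ condEnt p (Z 0) S + ∑ i : Fin K, condEnt p (Z i.succ) S := by
          have := ih (fun i => Z i.succ)
          linarith
      _ = ∑ i : Fin (K + 1), condEnt p (Z i) S :=
          (Fin.sum_univ_succ (fun i => condEnt p (Z i) S)).symm

theorem redundancy_eq_tc_of_condIndep
    {Ω : Type*} [Fintype Ω] {K : ℕ} {α β γ : Type*}
    [Fintype α] [DecidableEq α] [Fintype β] [DecidableEq β] [Fintype γ] [DecidableEq γ]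
    (p : Ω → ℝ) (hp : ∀ ω, 0 ≤ p ω) (hp1 : ∑ ω, p ω = 1)
    (Y : Ω → β) (Z : Fin K → Ω → α) (S : Ω → γ)
    (hindep : CondIndepGiven p Z (fun ω => (Y ω, S ω))) :
    (∑ i, condMI p Y (Z i) S) - condMI p Y (fun ω => fun i => Z i ω) S = TC p Z S ∧
      0 ≤ (∑ i, condMI p Y (Z i) S) - condMI p Y (fun ω => fun i => Z i ω) S := by
  have hstar := sum_ent_pair_of_condIndep p hp hp1 Z (fun ω => (Y ω, S ω)) hindep
  -- rewrite the pairings using the rotation equivalence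
  have h1 : ∀ i, ent p (fun ω => (Z i ω, (Y ω, S ω)))
      = ent p (fun ω => ((Y ω, Z i ω), S ω)) :=
    fun i => ent_comp p (rotEquiv α β γ) (fun ω => ((Y ω, Z i ω), S ω))
  have h2 : ent p (fun ω => ((fun i => Z i ω), (Y ω, S ω)))
      = ent p (fun ω => ((Y ω, fun i => Z i ω), S ω)) :=
    ent_comp p (rotEquiv (Fin K → α) β γ) (fun ω => ((Y ω, fun i => Z i ω), S ω))
  rw [h2, Finset.sum_congr rfl (fun i _ => h1 i)] at hstar
  -- the key linear identity
  constructor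
  · have hsum1 : ∑ i, condMI p Y (Z i) S
        = (K : ℝ) * (ent p (fun ω => (Y ω, S ω)) - ent p S)
          + (∑ i, ent p (fun ω => (Z i ω, S ω))
            - ∑ i, ent p (fun ω => ((Y ω, Z i ω), S ω))) := by
      unfold condMI condEnt
      calc ∑ i, (ent p (fun ω => (Y ω, S ω)) - ent p S
            + (ent p (fun ω => (Z i ω, S ω)) - ent p S)
            - (ent p (fun ω => ((Y ω, Z i ω), S ω)) - ent p S))
          = ∑ i, ((ent p (fun ω => (Y ω, S ω)) - ent p S)
            + (ent p (fun ω => (Z i ω, S ω)) - ent p (fun ω => ((Y ω, Z i ω), S ω)))) :=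
            Finset.sum_congr rfl fun i _ => by ring
        _ = _ := by
            rw [Finset.sum_add_distrib, Finset.sum_const, Finset.sum_sub_distrib]
            simp [nsmul_eq_mul]
    have hTC : TC p Z S = (∑ i, ent p (fun ω => (Z i ω, S ω)) - (K : ℝ) * ent p S)
        - (ent p (fun ω => ((fun i => Z i ω), S ω)) - ent p S) := by
      unfold TC condEnt
      rw [Finset.sum_sub_distrib, Finset.sum_const]
      simp [nsmul_eq_mul]
    rw [hsum1, hTC]
    unfold condMI condEnt
    linear_combination -hstar
  · have hge := condEnt_subadd p hp hp1 Z S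
    have hmain : (∑ i, condMI p Y (Z i) S) - condMI p Y (fun ω => fun i => Z i ω) S
        = TC p Z S := by
      have hsum1 : ∑ i, condMI p Y (Z i) S
          = (K : ℝ) * (ent p (fun ω => (Y ω, S ω)) - ent p S)
            + (∑ i, ent p (fun ω => (Z i ω, S ω))
              - ∑ i, ent p (fun ω => ((Y ω, Z i ω), S ω))) := by
        unfold condMI condEnt
        calc ∑ i, (ent p (fun ω => (Y ω, S ω)) - ent p S
              + (ent p (fun ω => (Z i ω, S ω)) - ent p S)
              - (ent p (fun ω => ((Y ω, Z i ω), S ω)) - ent p S))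
            = ∑ i, ((ent p (fun ω => (Y ω, S ω)) - ent p S)
              + (ent p (fun ω => (Z i ω, S ω)) - ent p (fun ω => ((Y ω, Z i ω), S ω)))) :=
              Finset.sum_congr rfl fun i _ => by ring
          _ = _ := by
              rw [Finset.sum_add_distrib, Finset.sum_const, Finset.sum_sub_distrib]
              simp [nsmul_eq_mul]
      have hTC : TC p Z S = (∑ i, ent p (fun ω => (Z i ω, S ω)) - (K : ℝ) * ent p S)
          - (ent p (fun ω => ((fun i => Z i ω), S ω)) - ent p S) := by
        unfold TC condEnt
        rw [Finset.sum_sub_distrib, Finset.sum_const]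
        simp [nsmul_eq_mul]
      rw [hsum1, hTC]
      unfold condMI condEnt
      linear_combination -hstar
    rw [hmain]
    unfold TC
    linarith

end CPT
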